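/- The images of 1, G, E₁, E₂, E₃ in R form a basis of R as a ℤ-module; in particular, the underlying additive group of R is free abelian of rank 5. -/

import Mathlib

noncomputable section

open MvPolynomial

namespace BT2Deg0

/-- The defining ideal of `R = ℤ[G, E₁, E₂, E₃] / (G² − 2G, G·Eᵢ, Eᵢ² − 2Eᵢ,
E₁E₂ − 2E₃, E₁E₃ − 2E₃, E₂E₃ − 2E₃)`, with `G = X 0`, `E₁ = X 1`, `E₂ = X 2`,
`E₃ = X 3`. -/
def I0 : Ideal (MvPolynomial (Fin 4) ℤ) :=
  Ideal.span
    { X 0 ^ 2 - 2 * X 0, X 0 * X 1, X 0 * X 2, X 0 * X 3,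
      X 1 ^ 2 - 2 * X 1, X 2 ^ 2 - 2 * X 2, X 3 ^ 2 - 2 * X 3,
      X 1 * X 2 - 2 * X 3, X 1 * X 3 - 2 * X 3, X 2 * X 3 - 2 * X 3 }

/-- The ring `R`, which is the degree-zero part `H⁰_{C₂}(BT²₊)` of the
`RO(ΠBT²)`-graded `C₂`-equivariant ordinary cohomology of `BT²`. -/
abbrev R0 : Type := MvPolynomial (Fin 4) ℤ ⧸ I0

/-- `G`, corresponding to the class `g`. -/
def G : R0 := Ideal.Quotient.mk I0 (X 0)

/-- `E₁`, corresponding to `ε₁ = e⁻²κ·ζ₀₀ζ₀₁c_{ω₁}`. -/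
def E1 : R0 := Ideal.Quotient.mk I0 (X 1)

/-- `E₂`, corresponding to `ε₂ = e⁻²κ·ζ₀₀ζ₁₀c_{ω₂}`. -/
def E2 : R0 := Ideal.Quotient.mk I0 (X 2)

/-- `E₃`, corresponding to `ε_⊕ = e⁻⁴κ·ζ₀₀²ζ₀₁ζ₁₀c_{ω₁}c_{ω₂}`. -/
def E3 : R0 := Ideal.Quotient.mk I0 (X 3)

lemma mem_I0 (p : MvPolynomial (Fin 4) ℤ)
    (h : p ∈ ({ X 0 ^ 2 - 2 * X 0, X 0 * X 1, X 0 * X 2, X 0 * X 3,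
      X 1 ^ 2 - 2 * X 1, X 2 ^ 2 - 2 * X 2, X 3 ^ 2 - 2 * X 3,
      X 1 * X 2 - 2 * X 3, X 1 * X 3 - 2 * X 3, X 2 * X 3 - 2 * X 3 } :
        Set (MvPolynomial (Fin 4) ℤ))) : p ∈ I0 :=
  Ideal.subset_span h

lemma mk_eq_mk {a b : MvPolynomial (Fin 4) ℤ} (h : a - b ∈ I0) :
    Ideal.Quotient.mk I0 a = Ideal.Quotient.mk I0 b :=
  Ideal.Quotient.mk_eq_mk_iff_sub_mem a b |>.mpr h

lemma hGG : G * G = 2 * G := by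
  show Ideal.Quotient.mk I0 (X 0) * Ideal.Quotient.mk I0 (X 0) = _
  rw [← map_mul, show ((2:R0) * G) = Ideal.Quotient.mk I0 (2 * X 0) by
    simp [G, map_mul, map_ofNat]]
  exact mk_eq_mk (by
    have : (X 0 * X 0 - 2 * X 0 : MvPolynomial (Fin 4) ℤ) = X 0 ^ 2 - 2 * X 0 := by ring
    rw [this]; exact mem_I0 _ (by simp))

lemma hGE1 : G * E1 = 0 := by
  show Ideal.Quotient.mk I0 (X 0) * Ideal.Quotient.mk I0 (X 1) = _
  rw [← map_mul, show (0:R0) = Ideal.Quotient.mk I0 0 from (map_zero _).symm]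
  exact mk_eq_mk (by simpa using mem_I0 (X 0 * X 1) (by simp))

lemma hGE2 : G * E2 = 0 := by
  show Ideal.Quotient.mk I0 (X 0) * Ideal.Quotient.mk I0 (X 2) = _
  rw [← map_mul, show (0:R0) = Ideal.Quotient.mk I0 0 from (map_zero _).symm]
  exact mk_eq_mk (by simpa using mem_I0 (X 0 * X 2) (by simp))

lemma hGE3 : G * E3 = 0 := by
  show Ideal.Quotient.mk I0 (X 0) * Ideal.Quotient.mk I0 (X 3) = _
  rw [← map_mul, show (0:R0) = Ideal.Quotient.mk I0 0 from (map_zero _).symm]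
  exact mk_eq_mk (by simpa using mem_I0 (X 0 * X 3) (by simp))

lemma hE11 : E1 * E1 = 2 * E1 := by
  show Ideal.Quotient.mk I0 (X 1) * Ideal.Quotient.mk I0 (X 1) = _
  rw [← map_mul, show ((2:R0) * E1) = Ideal.Quotient.mk I0 (2 * X 1) by
    simp [E1, map_mul, map_ofNat]]
  exact mk_eq_mk (by
    have : (X 1 * X 1 - 2 * X 1 : MvPolynomial (Fin 4) ℤ) = X 1 ^ 2 - 2 * X 1 := by ring
    rw [this]; exact mem_I0 _ (by simp))

lemma hE22 : E2 * E2 = 2 * E2 := by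
  show Ideal.Quotient.mk I0 (X 2) * Ideal.Quotient.mk I0 (X 2) = _
  rw [← map_mul, show ((2:R0) * E2) = Ideal.Quotient.mk I0 (2 * X 2) by
    simp [E2, map_mul, map_ofNat]]
  exact mk_eq_mk (by
    have : (X 2 * X 2 - 2 * X 2 : MvPolynomial (Fin 4) ℤ) = X 2 ^ 2 - 2 * X 2 := by ring
    rw [this]; exact mem_I0 _ (by simp))

lemma hE33 : E3 * E3 = 2 * E3 := by
  show Ideal.Quotient.mk I0 (X 3) * Ideal.Quotient.mk I0 (X 3) = _
  rw [← map_mul, show ((2:R0) * E3) = Ideal.Quotient.mk I0 (2 * X 3) by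
    simp [E3, map_mul, map_ofNat]]
  exact mk_eq_mk (by
    have : (X 3 * X 3 - 2 * X 3 : MvPolynomial (Fin 4) ℤ) = X 3 ^ 2 - 2 * X 3 := by ring
    rw [this]; exact mem_I0 _ (by simp))

lemma hE12 : E1 * E2 = 2 * E3 := by
  show Ideal.Quotient.mk I0 (X 1) * Ideal.Quotient.mk I0 (X 2) = _
  rw [← map_mul, show ((2:R0) * E3) = Ideal.Quotient.mk I0 (2 * X 3) by
    simp [E3, map_mul, map_ofNat]]
  exact mk_eq_mk (mem_I0 _ (by simp))

lemma hE13 : E1 * E3 = 2 * E3 := by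
  show Ideal.Quotient.mk I0 (X 1) * Ideal.Quotient.mk I0 (X 3) = _
  rw [← map_mul, show ((2:R0) * E3) = Ideal.Quotient.mk I0 (2 * X 3) by
    simp [E3, map_mul, map_ofNat]]
  exact mk_eq_mk (mem_I0 _ (by simp))

lemma hE23 : E2 * E3 = 2 * E3 := by
  show Ideal.Quotient.mk I0 (X 2) * Ideal.Quotient.mk I0 (X 3) = _
  rw [← map_mul, show ((2:R0) * E3) = Ideal.Quotient.mk I0 (2 * X 3) by
    simp [E3, map_mul, map_ofNat]]
  exact mk_eq_mk (mem_I0 _ (by simp))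

def v : Fin 5 → R0 := ![1, G, E1, E2, E3]

def val : Fin 5 → Fin 4 → ℤ :=
  ![![0,0,0,0], ![2,0,0,0], ![0,2,0,0], ![0,0,2,0], ![0,2,2,2]]

lemma I0_le_ker (j : Fin 5) : I0 ≤ RingHom.ker (eval (val j)) := by
  rw [I0, Ideal.span_le]
  intro x hx
  simp only [Set.mem_insert_iff, Set.mem_singleton_iff] at hx
  rcases hx with rfl|rfl|rfl|rfl|rfl|rfl|rfl|rfl|rfl|rfl <;>
    fin_cases j <;> simp [RingHom.mem_ker, val]

def phi (j : Fin 5) : R0 →+* ℤ :=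
  Ideal.Quotient.lift I0 (eval (val j)) (fun a ha => I0_le_ker j ha)

lemma phi_G (j : Fin 5) : phi j G = val j 0 := (Ideal.Quotient.lift_mk _ _ _).trans (eval_X _)
lemma phi_E1 (j : Fin 5) : phi j E1 = val j 1 := (Ideal.Quotient.lift_mk _ _ _).trans (eval_X _)
lemma phi_E2 (j : Fin 5) : phi j E2 = val j 2 := (Ideal.Quotient.lift_mk _ _ _).trans (eval_X _)
lemma phi_E3 (j : Fin 5) : phi j E3 = val j 3 := (Ideal.Quotient.lift_mk _ _ _).trans (eval_X _)

lemma li : LinearIndependent ℤ v := by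
  rw [Fintype.linearIndependent_iff]
  intro g hg i
  have key : ∀ j : Fin 5, phi j (∑ i, g i • v i) = 0 := fun j => by rw [hg, map_zero]
  have e0 := key 0; have e1 := key 1; have e2 := key 2; have e3 := key 3; have e4 := key 4
  rw [Fin.sum_univ_five] at e0 e1 e2 e3 e4
  simp [v, phi_G, phi_E1, phi_E2, phi_E3, val, Matrix.vecHead, Matrix.vecTail]
    at e0 e1 e2 e3 e4
  have h0 : g 0 = 0 := by omega
  have h1 : g 1 = 0 := by omega
  have h2 : g 2 = 0 := by omega
  have h3 : g 3 = 0 := by omega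
  have h4 : g 4 = 0 := by omega
  fin_cases i
  · exact h0
  · exact h1
  · exact h2
  · exact h3
  · exact h4

lemma span_top : Submodule.span ℤ (Set.range v) = ⊤ := by
  rw [eq_top_iff]
  have hmem : ∀ i : Fin 5, v i ∈ Submodule.span ℤ (Set.range v) :=
    fun i => Submodule.subset_span ⟨i, rfl⟩
  have h2 : ∀ w : R0, w ∈ Submodule.span ℤ (Set.range v) →
      2 * w ∈ Submodule.span ℤ (Set.range v) := by
    intro w hw
    simpa using Submodule.smul_mem (Submodule.span ℤ (Set.range v)) (2:ℤ) hw
  have hmulX : ∀ x ∈ Submodule.span ℤ (Set.range v), ∀ n : Fin 4,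
      x * Ideal.Quotient.mk I0 (X n) ∈ Submodule.span ℤ (Set.range v) := by
    intro x hx n
    induction hx using Submodule.span_induction with
    | mem y hy =>
        obtain ⟨i, rfl⟩ := hy
        fin_cases i <;> fin_cases n
        · show (1:R0) * G ∈ _; rw [one_mul]; exact hmem 1
        · show (1:R0) * E1 ∈ _; rw [one_mul]; exact hmem 2
        · show (1:R0) * E2 ∈ _; rw [one_mul]; exact hmem 3
        · show (1:R0) * E3 ∈ _; rw [one_mul]; exact hmem 4
        · show G * G ∈ _; rw [hGG]; exact h2 _ (hmem 1)
        · show G * E1 ∈ _; rw [hGE1]; exact Submodule.zero_mem _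
        · show G * E2 ∈ _; rw [hGE2]; exact Submodule.zero_mem _
        · show G * E3 ∈ _; rw [hGE3]; exact Submodule.zero_mem _
        · show E1 * G ∈ _; rw [mul_comm, hGE1]; exact Submodule.zero_mem _
        · show E1 * E1 ∈ _; rw [hE11]; exact h2 _ (hmem 2)
        · show E1 * E2 ∈ _; rw [hE12]; exact h2 _ (hmem 4)
        · show E1 * E3 ∈ _; rw [hE13]; exact h2 _ (hmem 4)
        · show E2 * G ∈ _; rw [mul_comm, hGE2]; exact Submodule.zero_mem _
        · show E2 * E1 ∈ _; rw [mul_comm, hE12]; exact h2 _ (hmem 4)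
        · show E2 * E2 ∈ _; rw [hE22]; exact h2 _ (hmem 3)
        · show E2 * E3 ∈ _; rw [hE23]; exact h2 _ (hmem 4)
        · show E3 * G ∈ _; rw [mul_comm, hGE3]; exact Submodule.zero_mem _
        · show E3 * E1 ∈ _; rw [mul_comm, hE13]; exact h2 _ (hmem 4)
        · show E3 * E2 ∈ _; rw [mul_comm, hE23]; exact h2 _ (hmem 4)
        · show E3 * E3 ∈ _; rw [hE33]; exact h2 _ (hmem 4)
    | zero => simpa using Submodule.zero_mem _
    | add a b _ _ ha hb => rw [add_mul]; exact Submodule.add_mem _ ha hb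
    | smul c a _ ha => rw [smul_mul_assoc]; exact Submodule.smul_mem _ c ha
  intro x _
  obtain ⟨p, rfl⟩ := Ideal.Quotient.mk_surjective x
  induction p using MvPolynomial.induction_on with
  | C a =>
      have : Ideal.Quotient.mk I0 (C a) = a • (1 : R0) := by
        rw [zsmul_eq_mul, mul_one]
        simp
      rw [this]
      exact Submodule.smul_mem _ a (hmem 0)
  | add p q hp hq => rw [map_add]; exact Submodule.add_mem _ (hp Submodule.mem_top) (hq Submodule.mem_top)
  | mul_X p n hp => rw [map_mul]; exact hmulX _ (hp Submodule.mem_top) n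

/-- The images of `1, G, E₁, E₂, E₃` in `R` form a `ℤ`-basis of `R`;
in particular `R` is a free abelian group of rank 5. -/
theorem basis_R0 :
    (∃ b : Module.Basis (Fin 5) ℤ R0, ∀ i, b i = (![1, G, E1, E2, E3] : Fin 5 → R0) i) ∧
    Module.Free ℤ R0 ∧ Module.finrank ℤ R0 = 5 := by
  let b : Module.Basis (Fin 5) ℤ R0 := Module.Basis.mk li (by rw [span_top])
  refine ⟨⟨b, fun i => Module.Basis.mk_apply li _ i⟩, Module.Free.of_basis b, ?_⟩
  rw [Module.finrank_eq_card_basis b, Fintype.card_fin]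


end BT2Deg0

end
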